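/- Let α ∈ ℝ and define, for ζ ∈ ℂ∖(−∞,1], G_α(ζ) := exp( −πiα·ζ^{1/2}·(1/(2πi))·∫_0^1 x^{−1/2}/(x−ζ) dx ), where ζ^{1/2} is the principal square root. Then: (1) G_α is holomorphic and non-vanishing on ℂ∖(−∞,1]; (2) for x ∈ (−∞,0), the boundary values from above and below satisfy G_{α+}(x)·G_{α−}(x) = 1; (3) for x ∈ (0,1), the boundary values satisfy G_{α−}(x) = G_{α+}(x)·e^{απi}; (4) G_α and 1/G_α are bounded in a punctured neighborhood of 0 in ℂ∖(−∞,1]; (5) there exist constants 0 < c ≤ C such that c·|ζ−1|^{−α/2} ≤ |G_α(ζ)| ≤ C·|ζ−1|^{−α/2} for ζ near 1 in ℂ∖(−∞,1]; (6) G_α(ζ) = 1 + O(ζ^{−1/2}) as ζ → ∞, uniformly in ℂ∖(−∞,1]. -/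

import Mathlib

open Complex Filter Topology MeasureTheory intervalIntegral
noncomputable section

/-- The slit plane `ℂ ∖ (−∞,1]`. -/
def SlitPlane1 : Set ℂ := {ζ : ℂ | ¬(ζ.im = 0 ∧ ζ.re ≤ 1)}

lemma SP1_cases {ζ : ℂ} (h : ζ ∈ SlitPlane1) : ζ.im ≠ 0 ∨ (ζ.im = 0 ∧ 1 < ζ.re) := by
  by_cases him : ζ.im = 0
  · exact Or.inr ⟨him, by by_contra hre; exact h ⟨him, not_lt.mp hre⟩⟩
  · exact Or.inl him

lemma SP1_ne_zero {ζ : ℂ} (h : ζ ∈ SlitPlane1) : ζ ≠ 0 := by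
  rintro rfl; exact h ⟨rfl, by norm_num⟩

lemma SP1_arg_ne_pi {ζ : ℂ} (h : ζ ∈ SlitPlane1) : ζ.arg ≠ Real.pi := by
  intro harg
  rcases Complex.arg_eq_pi_iff.mp harg with ⟨hre, him⟩
  exact h ⟨him, hre.le.trans one_pos.le⟩

lemma SP1_mem_slitPlane {ζ : ℂ} (h : ζ ∈ SlitPlane1) : ζ ∈ Complex.slitPlane := by
  rcases SP1_cases h with him | ⟨_, hre⟩
  · exact Or.inr him
  · exact Or.inl (lt_trans one_pos hre)

lemma SP1_isOpen : IsOpen SlitPlane1 := by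
  have : SlitPlane1 = (Complex.im ⁻¹' {0} ∩ Complex.re ⁻¹' Set.Iic 1)ᶜ := by
    ext z; simp [SlitPlane1]
  rw [this]
  exact ((isClosed_singleton.preimage Complex.continuous_im).inter
    (isClosed_Iic.preimage Complex.continuous_re)).isOpen_compl

lemma cpow_half_eq_exp {ζ : ℂ} (h : ζ ≠ 0) :
    ζ ^ ((1 : ℂ)/2) = Complex.exp (Complex.log ζ * ((1:ℂ)/2)) :=
  Complex.cpow_def_of_ne_zero h _

lemma exponent_re {ζ : ℂ} : (Complex.log ζ * ((1:ℂ)/2)).re = Real.log (norm ζ) / 2 := by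
  simp [Complex.mul_re, Complex.log_re, Complex.log_im]
  norm_num
  ring

lemma exponent_im {ζ : ℂ} : (Complex.log ζ * ((1:ℂ)/2)).im = ζ.arg / 2 := by
  simp [Complex.mul_im, Complex.log_re, Complex.log_im]
  norm_num
  ring

lemma sqrt_re_pos {ζ : ℂ} (h0 : ζ ≠ 0) (hπ : ζ.arg ≠ Real.pi) : 0 < (ζ ^ ((1:ℂ)/2)).re := by
  rw [cpow_half_eq_exp h0, Complex.exp_re, exponent_re, exponent_im]
  have h1 := Complex.neg_pi_lt_arg ζ
  have h2 := (Complex.arg_le_pi ζ).lt_of_ne hπ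
  have : 0 < Real.cos (ζ.arg / 2) :=
    Real.cos_pos_of_mem_Ioo ⟨by linarith, by linarith⟩
  positivity

lemma sqrt_im_pos {ζ : ℂ} (him : 0 < ζ.im) : 0 < (ζ ^ ((1:ℂ)/2)).im := by
  have h0 : ζ ≠ 0 := by intro h; rw [h] at him; simp at him
  rw [cpow_half_eq_exp h0, Complex.exp_im, exponent_re, exponent_im]
  have h1 : 0 < ζ.arg := by
    rcases (Complex.arg_nonneg_iff.mpr him.le).lt_or_eq with h | h
    · exact h
    · exact absurd (Complex.arg_eq_zero_iff.mp h.symm).2 him.ne'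
  have h2 : ζ.arg < Real.pi := by
    rcases (Complex.arg_le_pi ζ).lt_or_eq with h | h
    · exact h
    · exact absurd (Complex.arg_eq_pi_iff.mp h).2 him.ne'
  have : 0 < Real.sin (ζ.arg / 2) :=
    Real.sin_pos_of_pos_of_lt_pi (by linarith) (by linarith [Real.pi_pos])
  positivity

lemma sqrt_im_neg {ζ : ℂ} (him : ζ.im < 0) : (ζ ^ ((1:ℂ)/2)).im < 0 := by
  have h0 : ζ ≠ 0 := by intro h; rw [h] at him; simp at him
  rw [cpow_half_eq_exp h0, Complex.exp_im, exponent_re, exponent_im]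
  have h1 : ζ.arg < 0 := by
    by_contra h
    exact him.not_ge (Complex.arg_nonneg_iff.mp (not_lt.mp h))
  have h2 := Complex.neg_pi_lt_arg ζ
  have hs : Real.sin (ζ.arg / 2) < 0 :=
    Real.sin_neg_of_neg_of_neg_pi_lt (by linarith) (by linarith [Real.pi_pos])
  have he : 0 < Real.exp (Real.log (norm ζ) / 2) := Real.exp_pos _
  nlinarith

lemma sqrt_im_nonneg {ζ : ℂ} (h0 : ζ ≠ 0) (him : 0 ≤ ζ.im) : 0 ≤ (ζ ^ ((1:ℂ)/2)).im := by
  rw [cpow_half_eq_exp h0, Complex.exp_im, exponent_re, exponent_im]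
  have h1 := Complex.arg_nonneg_iff.mpr him
  have h2 := Complex.arg_le_pi ζ
  have : 0 ≤ Real.sin (ζ.arg / 2) :=
    Real.sin_nonneg_of_nonneg_of_le_pi (by linarith) (by linarith [Real.pi_pos])
  positivity

lemma sqrt_ofReal_pos {a : ℝ} (ha : 0 < a) :
    ((a : ℂ)) ^ ((1:ℂ)/2) = (Real.sqrt a : ℂ) := by
  rw [Real.sqrt_eq_rpow, Complex.ofReal_cpow ha.le]
  norm_num

lemma abs_sqrt {ζ : ℂ} (h0 : ζ ≠ 0) :
    norm (ζ ^ ((1:ℂ)/2)) = Real.sqrt (norm ζ) := by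
  rw [cpow_half_eq_exp h0, Complex.norm_exp, exponent_re,
    Real.sqrt_eq_rpow, Real.rpow_def_of_pos (norm_pos_iff.mpr h0)]
  ring_nf

lemma sqrt_mul_self {ζ : ℂ} (h0 : ζ ≠ 0) : ζ ^ ((1:ℂ)/2) * ζ ^ ((1:ℂ)/2) = ζ := by
  rw [← Complex.cpow_add _ _ h0]
  norm_num

lemma sqrt_SP1_re_pos {ζ : ℂ} (h : ζ ∈ SlitPlane1) : 0 < (ζ ^ ((1:ℂ)/2)).re :=
  sqrt_re_pos (SP1_ne_zero h) (SP1_arg_ne_pi h)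

lemma sqrt_SP1_eq_ofReal {ζ : ℂ} (him : ζ.im = 0) (hre : 1 < ζ.re) :
    ζ ^ ((1:ℂ)/2) = (Real.sqrt ζ.re : ℂ) := by
  have h2 : ζ = (ζ.re : ℂ) := by
    apply Complex.ext <;> simp [him]
  rw [h2, sqrt_ofReal_pos (by linarith)]
  simp

lemma sqrt_sub_mem_slitPlane {ζ : ℂ} (h : ζ ∈ SlitPlane1) {s : ℝ} (hs0 : 0 ≤ s) (hs1 : s ≤ 1) :
    ζ ^ ((1:ℂ)/2) - (s : ℂ) ∈ Complex.slitPlane := by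
  rcases SP1_cases h with him | ⟨him, hre⟩
  · right
    simp only [Complex.sub_im, Complex.ofReal_im, sub_zero]
    rcases him.lt_or_gt with h' | h'
    · exact (sqrt_im_neg h').ne
    · exact (sqrt_im_pos h').ne'
  · left
    rw [sqrt_SP1_eq_ofReal him hre]
    simp only [Complex.sub_re, Complex.ofReal_re]
    have : 1 < Real.sqrt ζ.re := by
      rw [show (1:ℝ) = Real.sqrt 1 by simp]
      exact Real.sqrt_lt_sqrt (by norm_num) hre
    linarith

lemma sqrt_add_mem_slitPlane {ζ : ℂ} (h : ζ ∈ SlitPlane1) {s : ℝ} (hs0 : 0 ≤ s) :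
    ζ ^ ((1:ℂ)/2) + (s : ℂ) ∈ Complex.slitPlane := by
  left
  simp only [Complex.add_re, Complex.ofReal_re]
  linarith [sqrt_SP1_re_pos h]

lemma dist_lower {ζ : ℂ} (h : ζ ∈ SlitPlane1) :
    ∃ d : ℝ, 0 < d ∧ ∀ x : ℝ, 0 ≤ x → x ≤ 1 → d ≤ norm ((x:ℂ) - ζ) := by
  rcases SP1_cases h with him | ⟨him, hre⟩
  · refine ⟨|ζ.im|, abs_pos.mpr him, fun x _ _ => ?_⟩
    calc |ζ.im| = |((x:ℂ) - ζ).im| := by simp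
    _ ≤ norm ((x:ℂ) - ζ) := Complex.abs_im_le_norm _
  · refine ⟨ζ.re - 1, by linarith, fun x hx0 hx1 => ?_⟩
    calc ζ.re - 1 ≤ |((x:ℂ) - ζ).re| := by
          simp only [Complex.sub_re, Complex.ofReal_re]
          rw [abs_sub_comm]
          rw [_root_.abs_of_nonneg (by linarith : (0:ℝ) ≤ ζ.re - x)]
          linarith
    _ ≤ norm ((x:ℂ) - ζ) := Complex.abs_re_le_norm _

lemma integrand_integrable {ζ : ℂ} (h : ζ ∈ SlitPlane1) :
    IntervalIntegrable (fun x : ℝ => (((Real.sqrt x)⁻¹ : ℝ) : ℂ) / ((x : ℂ) - ζ)) volume 0 1 := by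
  obtain ⟨d, hd, hdle⟩ := dist_lower h
  have hm1 : Measurable fun x : ℝ => (((Real.sqrt x)⁻¹ : ℝ) : ℂ) :=
    Complex.measurable_ofReal.comp Real.continuous_sqrt.measurable.inv
  have hm2 : Measurable fun x : ℝ => ((x : ℂ) - ζ) :=
    (Complex.measurable_ofReal).sub_const ζ
  have hmeas : Measurable fun x : ℝ => (((Real.sqrt x)⁻¹ : ℝ) : ℂ) / ((x : ℂ) - ζ) :=
    hm1.div hm2
  have hg : IntervalIntegrable (fun x : ℝ => d⁻¹ * x ^ (-(1/2) : ℝ)) volume 0 1 :=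
    (intervalIntegral.intervalIntegrable_rpow' (by norm_num)).const_mul _
  refine hg.mono_fun hmeas.aestronglyMeasurable ?_
  rw [Filter.EventuallyLE, ae_restrict_iff' measurableSet_uIoc]
  refine Filter.Eventually.of_forall fun x hx => ?_
  rw [Set.uIoc_of_le (by norm_num : (0:ℝ) ≤ 1)] at hx
  obtain ⟨hx0, hx1⟩ := hx
  have hsx : 0 < Real.sqrt x := Real.sqrt_pos.mpr hx0
  have hxabs : (0:ℝ) < norm ((x:ℂ) - ζ) := lt_of_lt_of_le hd (hdle x hx0.le hx1)
  simp only [norm_div, Complex.norm_real, Real.norm_eq_abs]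
  rw [_root_.abs_of_nonneg (by positivity : (0:ℝ) ≤ d⁻¹ * x ^ (-(1/2):ℝ))]
  have h1 : |(Real.sqrt x)⁻¹| = (Real.sqrt x)⁻¹ := _root_.abs_of_pos (by positivity)
  have h2 : (Real.sqrt x)⁻¹ = x ^ (-(1/2) : ℝ) := by
    rw [Real.sqrt_eq_rpow, ← Real.rpow_neg hx0.le]
  rw [h1, h2]
  calc x ^ (-(1/2):ℝ) / norm ((x:ℂ) - ζ) ≤ x ^ (-(1/2):ℝ) / d :=
        div_le_div_of_nonneg_left (by positivity) hd (hdle x hx0.le hx1)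
  _ = d⁻¹ * x ^ (-(1/2):ℝ) := by ring

lemma integral_eq {ζ : ℂ} (h : ζ ∈ SlitPlane1) :
    (∫ x in (0:ℝ)..1, (((Real.sqrt x)⁻¹ : ℝ) : ℂ) / ((x : ℂ) - ζ)) =
      (ζ ^ ((1:ℂ)/2))⁻¹ *
        (Complex.log (ζ ^ ((1:ℂ)/2) - 1) - Complex.log (ζ ^ ((1:ℂ)/2) + 1)) := by
  set w := ζ ^ ((1:ℂ)/2) with hw
  have hw0 : w ≠ 0 := by
    intro h'
    have := sqrt_SP1_re_pos h
    rw [← hw, h'] at this; simp at this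
  set F : ℝ → ℂ := fun x => w⁻¹ *
    (Complex.log (w - (Real.sqrt x : ℂ)) - Complex.log (w + (Real.sqrt x : ℂ))) with hF
  have hsqrtmem : ∀ x : ℝ, 0 ≤ x → x ≤ 1 → w - (Real.sqrt x : ℂ) ∈ Complex.slitPlane := by
    intro x hx0 hx1
    exact sqrt_sub_mem_slitPlane h (Real.sqrt_nonneg x)
      (by rw [show (1:ℝ) = Real.sqrt 1 by simp]; exact Real.sqrt_le_sqrt hx1)
  have hcont : ContinuousOn F (Set.Icc 0 1) := by
    apply ContinuousOn.mul continuousOn_const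
    apply ContinuousOn.sub
    · intro x hx
      exact (ContinuousAt.clog
        ((continuous_const.sub
          (Complex.continuous_ofReal.comp Real.continuous_sqrt)).continuousAt)
        (hsqrtmem x hx.1 hx.2)).continuousWithinAt
    · intro x hx
      exact (ContinuousAt.clog
        ((continuous_const.add
          (Complex.continuous_ofReal.comp Real.continuous_sqrt)).continuousAt)
        (sqrt_add_mem_slitPlane h (Real.sqrt_nonneg x))).continuousWithinAt
  have hderiv : ∀ x ∈ Set.Ioo (0:ℝ) 1,
      HasDerivAt F ((((Real.sqrt x)⁻¹ : ℝ) : ℂ) / ((x : ℂ) - ζ)) x := by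
    intro x hx
    have hx0 : 0 < x := hx.1
    have hsx : 0 < Real.sqrt x := Real.sqrt_pos.mpr hx0
    have hs : HasDerivAt (fun y : ℝ => ((Real.sqrt y : ℝ) : ℂ))
        ((1 / (2 * Real.sqrt x) : ℝ) : ℂ) x :=
      (Real.hasDerivAt_sqrt hx0.ne').ofReal_comp
    have h1 : HasDerivAt (fun y : ℝ => Complex.log (w - (Real.sqrt y : ℂ)))
        (-(((1 / (2 * Real.sqrt x) : ℝ) : ℂ)) / (w - (Real.sqrt x : ℂ))) x :=
      HasDerivAt.clog_real (hs.const_sub w) (hsqrtmem x hx0.le hx.2.le)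
    have h2 : HasDerivAt (fun y : ℝ => Complex.log (w + (Real.sqrt y : ℂ)))
        ((((1 / (2 * Real.sqrt x) : ℝ) : ℂ)) / (w + (Real.sqrt x : ℂ))) x :=
      HasDerivAt.clog_real (hs.const_add w) (sqrt_add_mem_slitPlane h (Real.sqrt_nonneg x))
    have h3 := ((h1.sub h2).const_mul w⁻¹)
    refine h3.congr_deriv (Eq.symm ?_)
    have hwsub : w - (Real.sqrt x : ℂ) ≠ 0 :=
      Complex.slitPlane_ne_zero (hsqrtmem x hx0.le hx.2.le)
    have hwadd : w + (Real.sqrt x : ℂ) ≠ 0 :=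
      Complex.slitPlane_ne_zero (sqrt_add_mem_slitPlane h (Real.sqrt_nonneg x))
    have hζx : (x:ℂ) - ζ ≠ 0 := by
      intro h'
      have : (x:ℂ) = ζ := by linear_combination h'
      rcases SP1_cases h with him | ⟨_, hre⟩
      · apply him; rw [← this]; simp
      · rw [← this] at hre; simp at hre; linarith [hx.2]
    have hsq : ((Real.sqrt x : ℂ)) * ((Real.sqrt x : ℂ)) = (x : ℂ) := by
      rw [← Complex.ofReal_mul, Real.mul_self_sqrt hx0.le]
    have hwsq : w * w = ζ := sqrt_mul_self (SP1_ne_zero h)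
    have hsxC : ((Real.sqrt x : ℝ) : ℂ) ≠ 0 := by
      simp [hsx.ne']
    have hne : ((Real.sqrt x : ℂ)) * ((Real.sqrt x : ℂ)) - w * w ≠ 0 := by
      rw [hsq, hwsq]; exact hζx
    rw [show ((x:ℂ) - ζ) = -((w - (Real.sqrt x : ℂ)) * (w + (Real.sqrt x : ℂ))) by
      rw [show -((w - (Real.sqrt x : ℂ)) * (w + (Real.sqrt x : ℂ))) =
        ((Real.sqrt x : ℂ)) * ((Real.sqrt x : ℂ)) - w * w by ring, hsq, hwsq]]
    rw [div_sub_div _ _ hwsub hwadd, ← mul_div_assoc,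
      div_eq_div_iff (neg_ne_zero.mpr (mul_ne_zero hwsub hwadd)) (mul_ne_zero hwsub hwadd)]
    push_cast
    field_simp
    ring
  have key := intervalIntegral.integral_eq_sub_of_hasDeriv_right_of_le (by norm_num : (0:ℝ) ≤ 1)
    hcont (fun x hx => (hderiv x hx).hasDerivWithinAt) (integrand_integrable h)
  rw [key]
  simp only [hF, Real.sqrt_one, Real.sqrt_zero, Complex.ofReal_one, Complex.ofReal_zero,
    sub_zero, add_zero, sub_self, mul_zero]

/-- `G_α(ζ) = exp( −πiα ζ^{1/2} (1/(2πi)) ∫_0^1 x^{−1/2}/(x−ζ) dx )`, with the principal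
branch of the square root. -/
def Gfun (α : ℝ) (ζ : ℂ) : ℂ :=
  Complex.exp (-((Real.pi : ℂ) * Complex.I * (α : ℂ)) * ζ ^ ((1 : ℂ) / 2) *
    ((2 * (Real.pi : ℂ) * Complex.I)⁻¹ *
      ∫ x in (0:ℝ)..1, (((Real.sqrt x)⁻¹ : ℝ) : ℂ) / ((x : ℂ) - ζ)))

def gfun (α : ℝ) (ζ : ℂ) : ℂ :=
  ((-(α/2) : ℝ) : ℂ) *
    (Complex.log (ζ ^ ((1:ℂ)/2) - 1) - Complex.log (ζ ^ ((1:ℂ)/2) + 1))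

lemma sqrt_SP1_ne_zero {ζ : ℂ} (h : ζ ∈ SlitPlane1) : ζ ^ ((1:ℂ)/2) ≠ 0 := by
  intro h'
  have := sqrt_SP1_re_pos h
  rw [h'] at this; simp at this

lemma Gfun_eq {α : ℝ} {ζ : ℂ} (h : ζ ∈ SlitPlane1) :
    Gfun α ζ = Complex.exp (gfun α ζ) := by
  rw [Gfun, integral_eq h, gfun]
  congr 1
  have hπ : ((Real.pi : ℝ) : ℂ) ≠ 0 := Complex.ofReal_ne_zero.mpr Real.pi_ne_zero
  have hI : Complex.I ≠ 0 := Complex.I_ne_zero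
  have hw : ζ ^ ((1:ℂ)/2) ≠ 0 := sqrt_SP1_ne_zero h
  push_cast
  field_simp

lemma gfun_differentiableAt {α : ℝ} {ζ : ℂ} (h : ζ ∈ SlitPlane1) :
    DifferentiableAt ℂ (fun z => Complex.exp (gfun α z)) ζ := by
  have hw : DifferentiableAt ℂ (fun z : ℂ => z ^ ((1:ℂ)/2)) ζ :=
    (Complex.hasStrictDerivAt_cpow_const (SP1_mem_slitPlane h)).hasDerivAt.differentiableAt
  have h1 : DifferentiableAt ℂ (fun z : ℂ => Complex.log (z ^ ((1:ℂ)/2) - 1)) ζ := by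
    apply DifferentiableAt.clog (hw.sub_const 1)
    simpa using sqrt_sub_mem_slitPlane h (by norm_num : (0:ℝ) ≤ 1) le_rfl
  have h2 : DifferentiableAt ℂ (fun z : ℂ => Complex.log (z ^ ((1:ℂ)/2) + 1)) ζ := by
    apply DifferentiableAt.clog (hw.add_const 1)
    simpa using sqrt_add_mem_slitPlane h (by norm_num : (0:ℝ) ≤ 1)
  exact (((h1.sub h2).const_mul _).cexp)

lemma Gfun_differentiableOn (α : ℝ) : DifferentiableOn ℂ (Gfun α) SlitPlane1 := by
  intro ζ hζ
  have : DifferentiableAt ℂ (Gfun α) ζ := by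
    apply (gfun_differentiableAt (α := α) hζ).congr_of_eventuallyEq
    filter_upwards [SP1_isOpen.mem_nhds hζ] with z hz
    exact Gfun_eq hz
  exact this.differentiableWithinAt

lemma Gfun_ne_zero (α : ℝ) : ∀ ζ ∈ SlitPlane1, Gfun α ζ ≠ 0 := fun ζ hζ => by
  rw [Gfun_eq hζ]; exact Complex.exp_ne_zero _

-- boundary limit helpers
lemma path_upper_mem {x : ℝ} : ∀ ε ∈ Set.Ioi (0:ℝ), ((x:ℂ) + ε * Complex.I) ∈ SlitPlane1 := by
  intro ε hε h'
  have : ((x:ℂ) + ε * Complex.I).im = ε := by simp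
  rw [h'.1] at this
  exact (lt_irrefl (0:ℝ)) (this ▸ hε)

lemma path_lower_mem {x : ℝ} : ∀ ε ∈ Set.Ioi (0:ℝ), ((x:ℂ) - ε * Complex.I) ∈ SlitPlane1 := by
  intro ε hε h'
  have : ((x:ℂ) - ε * Complex.I).im = -ε := by simp
  rw [h'.1] at this
  have : ε = 0 := by linarith [this.symm]
  exact (lt_irrefl (0:ℝ)) (this ▸ hε)

lemma tendsto_path_upper (x : ℝ) :
    Filter.Tendsto (fun ε : ℝ => (x:ℂ) + ε * Complex.I) (nhdsWithin 0 (Set.Ioi 0))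
      (nhdsWithin (x:ℂ) {z : ℂ | 0 ≤ z.im}) := by
  rw [tendsto_nhdsWithin_iff]
  constructor
  · have : Filter.Tendsto (fun ε : ℝ => (x:ℂ) + ε * Complex.I) (nhds 0) (nhds ((x:ℂ) + 0 * Complex.I)) := by
      exact (tendsto_const_nhds.add ((Complex.continuous_ofReal.tendsto 0).mul tendsto_const_nhds))
    simpa using this.mono_left nhdsWithin_le_nhds
  · filter_upwards [self_mem_nhdsWithin] with ε hε
    simp only [Set.mem_setOf_eq, Complex.add_im, Complex.ofReal_im, Complex.mul_im,
      Complex.ofReal_re, Complex.I_im, Complex.I_re, mul_zero, mul_one, zero_add]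
    simp only [Complex.ofReal_im, mul_zero, add_zero]
    exact (le_of_lt hε)

lemma tendsto_path_lower (x : ℝ) :
    Filter.Tendsto (fun ε : ℝ => (x:ℂ) - ε * Complex.I) (nhdsWithin 0 (Set.Ioi 0))
      (nhdsWithin (x:ℂ) {z : ℂ | z.im < 0}) := by
  rw [tendsto_nhdsWithin_iff]
  constructor
  · have : Filter.Tendsto (fun ε : ℝ => (x:ℂ) - ε * Complex.I) (nhds 0) (nhds ((x:ℂ) - 0 * Complex.I)) := by
      exact (tendsto_const_nhds.sub ((Complex.continuous_ofReal.tendsto 0).mul tendsto_const_nhds))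
    simpa using this.mono_left nhdsWithin_le_nhds
  · filter_upwards [self_mem_nhdsWithin] with ε hε
    have : ((x:ℂ) - ε * Complex.I).im = -ε := by simp
    simp only [Set.mem_setOf_eq, this]
    linarith [Set.mem_Ioi.mp hε]

lemma tendsto_sqrt_upper_neg {x : ℝ} (hx : x < 0) :
    Filter.Tendsto (fun ε : ℝ => ((x:ℂ) + ε * Complex.I) ^ ((1:ℂ)/2))
      (nhdsWithin 0 (Set.Ioi 0)) (nhds ((Real.sqrt (-x) : ℂ) * Complex.I)) := by
  have hlog : Filter.Tendsto (fun ε : ℝ => Complex.log ((x:ℂ) + ε * Complex.I))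
      (nhdsWithin 0 (Set.Ioi 0))
      (nhds ((Real.log (norm (x:ℂ)) : ℂ) + Real.pi * Complex.I)) :=
    (tendsto_log_nhdsWithin_im_nonneg_of_re_neg_of_im_zero
      (by simpa using hx) (by simp)).comp (tendsto_path_upper x)
  have hexp : Filter.Tendsto
      (fun ε : ℝ => Complex.exp (Complex.log ((x:ℂ) + ε * Complex.I) * ((1:ℂ)/2)))
      (nhdsWithin 0 (Set.Ioi 0))
      (nhds (Complex.exp (((Real.log (norm (x:ℂ)) : ℂ) + Real.pi * Complex.I) * ((1:ℂ)/2)))) :=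
    (Complex.continuous_exp.tendsto _).comp (hlog.mul tendsto_const_nhds)
  have heq : Complex.exp (((Real.log (norm (x:ℂ)) : ℂ) + Real.pi * Complex.I) * ((1:ℂ)/2))
      = (Real.sqrt (-x) : ℂ) * Complex.I := by
    rw [show ((Real.log (norm (x:ℂ)) : ℂ) + Real.pi * Complex.I) * ((1:ℂ)/2)
        = ((Real.log (norm (x:ℂ)) / 2 : ℝ) : ℂ) + ((Real.pi/2 : ℝ):ℂ) * Complex.I by
      push_cast; ring]
    rw [Complex.exp_add, Complex.exp_mul_I]
    rw [← Complex.ofReal_exp, ← Complex.ofReal_cos, ← Complex.ofReal_sin]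
    rw [Real.cos_pi_div_two, Real.sin_pi_div_two]
    have habs : norm (x:ℂ) = -x := by
      rw [Complex.norm_real, Real.norm_eq_abs, abs_of_neg hx]
    rw [habs, show Real.exp (Real.log (-x) / 2) = Real.sqrt (-x) by
      rw [Real.sqrt_eq_rpow, Real.rpow_def_of_pos (by linarith)]; ring_nf]
    push_cast; ring
  rw [← heq]
  apply hexp.congr'
  filter_upwards [self_mem_nhdsWithin] with ε hε
  have h0 : ((x:ℂ) + ε * Complex.I) ≠ 0 := SP1_ne_zero (path_upper_mem ε hε)
  rw [cpow_half_eq_exp h0]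

lemma tendsto_sqrt_lower_neg {x : ℝ} (hx : x < 0) :
    Filter.Tendsto (fun ε : ℝ => ((x:ℂ) - ε * Complex.I) ^ ((1:ℂ)/2))
      (nhdsWithin 0 (Set.Ioi 0)) (nhds (-((Real.sqrt (-x) : ℂ) * Complex.I))) := by
  have hlog : Filter.Tendsto (fun ε : ℝ => Complex.log ((x:ℂ) - ε * Complex.I))
      (nhdsWithin 0 (Set.Ioi 0))
      (nhds ((Real.log (norm (x:ℂ)) : ℂ) - Real.pi * Complex.I)) :=
    (Complex.tendsto_log_nhdsWithin_im_neg_of_re_neg_of_im_zero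
      (by simpa using hx) (by simp)).comp (tendsto_path_lower x)
  have hexp : Filter.Tendsto
      (fun ε : ℝ => Complex.exp (Complex.log ((x:ℂ) - ε * Complex.I) * ((1:ℂ)/2)))
      (nhdsWithin 0 (Set.Ioi 0))
      (nhds (Complex.exp (((Real.log (norm (x:ℂ)) : ℂ) - Real.pi * Complex.I) * ((1:ℂ)/2)))) :=
    (Complex.continuous_exp.tendsto _).comp (hlog.mul tendsto_const_nhds)
  have heq : Complex.exp (((Real.log (norm (x:ℂ)) : ℂ) - Real.pi * Complex.I) * ((1:ℂ)/2))
      = -((Real.sqrt (-x) : ℂ) * Complex.I) := by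
    rw [show ((Real.log (norm (x:ℂ)) : ℂ) - Real.pi * Complex.I) * ((1:ℂ)/2)
        = ((Real.log (norm (x:ℂ)) / 2 : ℝ) : ℂ) + ((-(Real.pi/2) : ℝ):ℂ) * Complex.I by
      push_cast; ring]
    rw [Complex.exp_add, Complex.exp_mul_I]
    rw [← Complex.ofReal_exp, ← Complex.ofReal_cos, ← Complex.ofReal_sin]
    rw [Real.cos_neg, Real.sin_neg, Real.cos_pi_div_two, Real.sin_pi_div_two]
    have habs : norm (x:ℂ) = -x := by
      rw [Complex.norm_real, Real.norm_eq_abs, abs_of_neg hx]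
    rw [habs, show Real.exp (Real.log (-x) / 2) = Real.sqrt (-x) by
      rw [Real.sqrt_eq_rpow, Real.rpow_def_of_pos (by linarith)]; ring_nf]
    push_cast; ring
  rw [← heq]
  apply hexp.congr'
  filter_upwards [self_mem_nhdsWithin] with ε hε
  have h0 : ((x:ℂ) - ε * Complex.I) ≠ 0 := SP1_ne_zero (path_lower_mem ε hε)
  rw [cpow_half_eq_exp h0]

lemma tendsto_Gfun_of_gfun {α : ℝ} {path : ℝ → ℂ} (hmem : ∀ ε ∈ Set.Ioi (0:ℝ), path ε ∈ SlitPlane1)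
    {L : ℂ} (h : Filter.Tendsto (fun ε => gfun α (path ε)) (nhdsWithin 0 (Set.Ioi 0)) (nhds L)) :
    Filter.Tendsto (fun ε => Gfun α (path ε)) (nhdsWithin 0 (Set.Ioi 0)) (nhds (Complex.exp L)) := by
  apply ((Complex.continuous_exp.tendsto _).comp h).congr'
  filter_upwards [self_mem_nhdsWithin] with ε hε
  exact (Gfun_eq (hmem ε hε)).symm

lemma part3 (α : ℝ) (x : ℝ) (hx : x < 0) : ∃ Gp Gm : ℂ,
    Filter.Tendsto (fun ε : ℝ => Gfun α ((x : ℂ) + ε * Complex.I))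
      (nhdsWithin 0 (Set.Ioi 0)) (nhds Gp) ∧
    Filter.Tendsto (fun ε : ℝ => Gfun α ((x : ℂ) - ε * Complex.I))
      (nhdsWithin 0 (Set.Ioi 0)) (nhds Gm) ∧
    Gp * Gm = 1 := by
  set t : ℝ := Real.sqrt (-x) with ht
  have ht0 : 0 < t := Real.sqrt_pos.mpr (by linarith)
  set c : ℂ := ((-(α/2) : ℝ) : ℂ) with hc
  have hm1 : ((t:ℂ) * Complex.I - 1) ∈ Complex.slitPlane := by
    right; simp [ht0.ne']
  have hm2 : ((t:ℂ) * Complex.I + 1) ∈ Complex.slitPlane := by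
    right; simp [ht0.ne']
  have hm3 : (-((t:ℂ) * Complex.I) - 1) ∈ Complex.slitPlane := by
    right; simp [ht0.ne']
  have hm4 : (-((t:ℂ) * Complex.I) + 1) ∈ Complex.slitPlane := by
    right; simp [ht0.ne']
  set gp : ℂ := c * (Complex.log ((t:ℂ) * Complex.I - 1) - Complex.log ((t:ℂ) * Complex.I + 1))
  set gm : ℂ := c * (Complex.log (-((t:ℂ) * Complex.I) - 1) - Complex.log (-((t:ℂ) * Complex.I) + 1))
  refine ⟨Complex.exp gp, Complex.exp gm, ?_, ?_, ?_⟩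
  · apply tendsto_Gfun_of_gfun (fun ε hε => path_upper_mem ε hε)
    have hw := tendsto_sqrt_upper_neg hx
    exact tendsto_const_nhds.mul
      (((hw.sub tendsto_const_nhds).clog hm1).sub ((hw.add tendsto_const_nhds).clog hm2))
  · apply tendsto_Gfun_of_gfun (fun ε hε => path_lower_mem ε hε)
    have hw := tendsto_sqrt_lower_neg hx
    exact tendsto_const_nhds.mul
      (((hw.sub tendsto_const_nhds).clog hm3).sub ((hw.add tendsto_const_nhds).clog hm4))
  · rw [← Complex.exp_add]
    have e1 : -((t:ℂ) * Complex.I) - 1 = (starRingEnd ℂ) ((t:ℂ) * Complex.I - 1) := by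
      simp [Complex.ext_iff]
    have e2 : -((t:ℂ) * Complex.I) + 1 = (starRingEnd ℂ) ((t:ℂ) * Complex.I + 1) := by
      simp [Complex.ext_iff]
    have harg1 : ((t:ℂ) * Complex.I - 1).arg ≠ Real.pi := by
      intro h'
      have := (Complex.arg_eq_pi_iff.mp h').2
      simp [ht0.ne'] at this
    have harg2 : ((t:ℂ) * Complex.I + 1).arg ≠ Real.pi := by
      intro h'
      have := (Complex.arg_eq_pi_iff.mp h').2
      simp [ht0.ne'] at this
    have eabs : norm ((t:ℂ) * Complex.I - 1) = norm ((t:ℂ) * Complex.I + 1) := by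
      have : (t:ℂ) * Complex.I - 1 = -((starRingEnd ℂ) ((t:ℂ) * Complex.I + 1)) := by
        simp [Complex.ext_iff]
      rw [this, norm_neg, Complex.norm_conj]
    have : gp + gm = 0 := by
      show c * (Complex.log ((t:ℂ) * Complex.I - 1) - Complex.log ((t:ℂ) * Complex.I + 1)) +
        c * (Complex.log (-((t:ℂ) * Complex.I) - 1) - Complex.log (-((t:ℂ) * Complex.I) + 1)) = 0
      rw [e1, e2, Complex.log_conj _ harg1, Complex.log_conj _ harg2]
      rw [show ∀ a b : ℂ, c * (a - b) + c * ((starRingEnd ℂ) a - (starRingEnd ℂ) b)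
          = c * ((a + (starRingEnd ℂ) a) - (b + (starRingEnd ℂ) b)) from fun a b => by ring]
      rw [Complex.add_conj, Complex.add_conj]
      simp only [Complex.log_re, eabs]
      ring
    rw [this, Complex.exp_zero]

lemma sqrt_lt_one_of_lt_one {x : ℝ} (hx1 : x < 1) : Real.sqrt x < 1 := by
  rcases le_or_gt x 0 with h | h
  · calc Real.sqrt x = 0 := Real.sqrt_eq_zero'.mpr h
    _ < 1 := one_pos
  · rw [show (1:ℝ) = Real.sqrt 1 by simp]
    exact Real.sqrt_lt_sqrt h.le hx1

lemma part4 (α : ℝ) (x : ℝ) (hx0 : 0 < x) (hx1 : x < 1) : ∃ Gp Gm : ℂ,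
    Filter.Tendsto (fun ε : ℝ => Gfun α ((x : ℂ) + ε * Complex.I))
      (nhdsWithin 0 (Set.Ioi 0)) (nhds Gp) ∧
    Filter.Tendsto (fun ε : ℝ => Gfun α ((x : ℂ) - ε * Complex.I))
      (nhdsWithin 0 (Set.Ioi 0)) (nhds Gm) ∧
    Gm = Gp * Complex.exp ((α : ℂ) * (Real.pi : ℂ) * Complex.I) := by
  set s : ℝ := Real.sqrt x with hs
  have hs0 : 0 < s := Real.sqrt_pos.mpr hx0
  have hs1 : s < 1 := sqrt_lt_one_of_lt_one hx1
  set c : ℂ := ((-(α/2) : ℝ) : ℂ) with hc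
  have hxm : (x:ℂ) ∈ Complex.slitPlane := by left; simpa using hx0
  have hsqrt_x : ((x:ℂ)) ^ ((1:ℂ)/2) = (s : ℂ) := sqrt_ofReal_pos hx0
  -- limit of sqrt along both paths (in 𝓝 sense)
  have hcpow : ContinuousAt (fun z : ℂ => z ^ ((1:ℂ)/2)) (x:ℂ) :=
    continuousAt_cpow_const hxm
  have hwp_n : Filter.Tendsto (fun ε : ℝ => ((x:ℂ) + ε * Complex.I) ^ ((1:ℂ)/2))
      (nhdsWithin 0 (Set.Ioi 0)) (nhds (s:ℂ)) := by
    rw [← hsqrt_x]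
    exact hcpow.tendsto.comp ((tendsto_path_upper x).mono_right nhdsWithin_le_nhds)
  have hwm_n : Filter.Tendsto (fun ε : ℝ => ((x:ℂ) - ε * Complex.I) ^ ((1:ℂ)/2))
      (nhdsWithin 0 (Set.Ioi 0)) (nhds (s:ℂ)) := by
    rw [← hsqrt_x]
    exact hcpow.tendsto.comp ((tendsto_path_lower x).mono_right nhdsWithin_le_nhds)
  -- limit of log (w - 1) along upper path
  have hlog1p : Filter.Tendsto (fun ε : ℝ => Complex.log (((x:ℂ) + ε * Complex.I) ^ ((1:ℂ)/2) - 1))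
      (nhdsWithin 0 (Set.Ioi 0))
      (nhds ((Real.log (norm ((s:ℂ) - 1)) : ℂ) + Real.pi * Complex.I)) := by
    apply (tendsto_log_nhdsWithin_im_nonneg_of_re_neg_of_im_zero
      (by simp [hs1] : ((s:ℂ) - 1).re < 0) (by simp)).comp
    rw [tendsto_nhdsWithin_iff]
    constructor
    · exact hwp_n.sub_const 1
    · filter_upwards [self_mem_nhdsWithin] with ε hε
      have him : 0 ≤ (((x:ℂ) + ε * Complex.I)).im := by
        simp; linarith [Set.mem_Ioi.mp hε]
      have := sqrt_im_nonneg (SP1_ne_zero (path_upper_mem ε hε)) him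
      simpa using this
  have hlog1m : Filter.Tendsto (fun ε : ℝ => Complex.log (((x:ℂ) - ε * Complex.I) ^ ((1:ℂ)/2) - 1))
      (nhdsWithin 0 (Set.Ioi 0))
      (nhds ((Real.log (norm ((s:ℂ) - 1)) : ℂ) - Real.pi * Complex.I)) := by
    apply (Complex.tendsto_log_nhdsWithin_im_neg_of_re_neg_of_im_zero
      (by simp [hs1] : ((s:ℂ) - 1).re < 0) (by simp)).comp
    rw [tendsto_nhdsWithin_iff]
    constructor
    · exact hwm_n.sub_const 1
    · filter_upwards [self_mem_nhdsWithin] with ε hε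
      have him : (((x:ℂ) - ε * Complex.I)).im < 0 := by
        simp; exact Set.mem_Ioi.mp hε
      have := sqrt_im_neg him
      simpa using this
  have hm2 : ((s:ℂ) + 1) ∈ Complex.slitPlane := by
    left; simp; linarith
  set A : ℂ := (Real.log (norm ((s:ℂ) - 1)) : ℂ)
  set B : ℂ := Complex.log ((s:ℂ) + 1)
  set gp : ℂ := c * ((A + Real.pi * Complex.I) - B)
  set gm : ℂ := c * ((A - Real.pi * Complex.I) - B)
  refine ⟨Complex.exp gp, Complex.exp gm, ?_, ?_, ?_⟩
  · apply tendsto_Gfun_of_gfun (fun ε hε => path_upper_mem ε hε)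
    exact tendsto_const_nhds.mul (hlog1p.sub ((hwp_n.add tendsto_const_nhds).clog hm2))
  · apply tendsto_Gfun_of_gfun (fun ε hε => path_lower_mem ε hε)
    exact tendsto_const_nhds.mul (hlog1m.sub ((hwm_n.add tendsto_const_nhds).clog hm2))
  · rw [← Complex.exp_add]
    show Complex.exp (c * ((A - Real.pi * Complex.I) - B)) =
      Complex.exp (c * ((A + Real.pi * Complex.I) - B) + (α : ℂ) * (Real.pi : ℂ) * Complex.I)
    congr 1
    rw [hc]
    push_cast
    ring

lemma abs_gfun_exp {α : ℝ} {ζ : ℂ} (h : ζ ∈ SlitPlane1) :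
    norm (Gfun α ζ) = Real.exp ((gfun α ζ).re) := by
  rw [Gfun_eq h, Complex.norm_exp]

lemma gfun_re {α : ℝ} (ζ : ℂ) :
    (gfun α ζ).re = -(α/2) * (Real.log (norm (ζ ^ ((1:ℂ)/2) - 1))
      - Real.log (norm (ζ ^ ((1:ℂ)/2) + 1))) := by
  rw [gfun, Complex.re_ofReal_mul, Complex.sub_re, Complex.log_re, Complex.log_re]

lemma abs_log_interval {r c : ℝ} (hc : 1 ≤ c) (h1 : c⁻¹ ≤ r) (h2 : r ≤ c) :
    |Real.log r| ≤ Real.log c := by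
  have hc0 : (0:ℝ) < c := by linarith
  have hr0 : (0:ℝ) < r := lt_of_lt_of_le (by positivity) h1
  rw [abs_le]
  constructor
  · rw [← Real.log_inv]
    exact Real.log_le_log (by positivity) h1
  · exact Real.log_le_log hr0 h2

lemma abs_log_complex_le {z : ℂ} (h1 : 1/2 ≤ norm z) (h2 : norm z ≤ 2) :
    norm (Complex.log z) ≤ Real.log 2 + Real.pi := by
  calc norm (Complex.log z) ≤ |(Complex.log z).re| + |(Complex.log z).im| :=
        Complex.norm_le_abs_re_add_abs_im _
  _ ≤ Real.log 2 + Real.pi := by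
      rw [Complex.log_re, Complex.log_im]
      have := abs_log_interval (by norm_num : (1:ℝ) ≤ 2) (by rw [show (2:ℝ)⁻¹ = 1/2 by norm_num]; exact h1) h2
      have h3 := Complex.abs_arg_le_pi z
      exact add_le_add this h3

lemma part5 (α : ℝ) : ∃ δ C : ℝ, 0 < δ ∧ ∀ ζ ∈ SlitPlane1, norm ζ < δ →
    norm (Gfun α ζ) ≤ C ∧ (norm (Gfun α ζ))⁻¹ ≤ C := by
  refine ⟨1/4, Real.exp (|α| * (Real.log 2 + Real.pi)), by norm_num, fun ζ hζ hlt => ?_⟩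
  set w : ℂ := ζ ^ ((1:ℂ)/2) with hwdef
  have h0 : ζ ≠ 0 := SP1_ne_zero hζ
  have habsw : norm w < 1/2 := by
    rw [hwdef, abs_sqrt h0]
    calc Real.sqrt (norm ζ) < Real.sqrt (1/4) :=
          Real.sqrt_lt_sqrt (by positivity) hlt
    _ = 1/2 := by
        rw [show (1/4 : ℝ) = (1/2)^2 by norm_num, Real.sqrt_sq (by norm_num)]
  have hb1 : 1/2 ≤ norm (w - 1) ∧ norm (w - 1) ≤ 2 := by
    constructor
    · have : ‖(1:ℂ)‖ - ‖w‖ ≤ ‖(1:ℂ) - w‖ := norm_sub_norm_le _ _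
      rw [norm_sub_rev] at this
      simp only [norm_one] at this
      linarith
    · have : ‖w - 1‖ ≤ ‖w‖ + ‖(1:ℂ)‖ := norm_sub_le _ _
      simp only [norm_one] at this
      linarith
  have hb2 : 1/2 ≤ norm (w + 1) ∧ norm (w + 1) ≤ 2 := by
    constructor
    · have : ‖(1:ℂ)‖ - ‖-w‖ ≤ ‖(1:ℂ) - -w‖ := norm_sub_norm_le _ _
      simp only [norm_one, norm_neg, sub_neg_eq_add] at this
      rw [show (1:ℂ) + w = w + 1 by ring] at this
      linarith
    · have : ‖w + 1‖ ≤ ‖w‖ + ‖(1:ℂ)‖ := norm_add_le _ _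
      simp only [norm_one] at this
      linarith
  have l1 := abs_log_complex_le hb1.1 hb1.2
  have l2 := abs_log_complex_le hb2.1 hb2.2
  have key : norm (Complex.log (w - 1) - Complex.log (w + 1))
      ≤ (Real.log 2 + Real.pi) + (Real.log 2 + Real.pi) := by
    calc norm (Complex.log (w - 1) - Complex.log (w + 1))
        ≤ norm (Complex.log (w - 1)) + norm (Complex.log (w + 1)) := by
          simpa using
            norm_sub_le (Complex.log (w - 1)) (Complex.log (w + 1))
    _ ≤ (Real.log 2 + Real.pi) + (Real.log 2 + Real.pi) := add_le_add l1 l2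
  have hgabs : norm (gfun α ζ) ≤ |α| * (Real.log 2 + Real.pi) := by
    rw [gfun, norm_mul, Complex.norm_real, Real.norm_eq_abs]
    rw [show |(-(α/2))| = |α|/2 by rw [abs_neg, abs_div]; norm_num]
    calc |α|/2 * norm (Complex.log (ζ ^ ((1:ℂ)/2) - 1) - Complex.log (ζ ^ ((1:ℂ)/2) + 1))
        ≤ |α|/2 * ((Real.log 2 + Real.pi) + (Real.log 2 + Real.pi)) :=
          mul_le_mul_of_nonneg_left key (by positivity)
    _ = |α| * (Real.log 2 + Real.pi) := by ring
  constructor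
  · rw [abs_gfun_exp hζ]
    apply Real.exp_le_exp.mpr
    calc (gfun α ζ).re ≤ norm (gfun α ζ) := Complex.re_le_norm _
    _ ≤ |α| * (Real.log 2 + Real.pi) := hgabs
  · rw [abs_gfun_exp hζ, ← Real.exp_neg]
    apply Real.exp_le_exp.mpr
    calc -(gfun α ζ).re = (-(gfun α ζ)).re := by simp
    _ ≤ norm (-(gfun α ζ)) := Complex.re_le_norm _
    _ = norm (gfun α ζ) := by rw [norm_neg]
    _ ≤ |α| * (Real.log 2 + Real.pi) := hgabs

lemma part6 (α : ℝ) : ∃ c C δ : ℝ, 0 < c ∧ 0 < δ ∧ ∀ ζ ∈ SlitPlane1,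
    norm (ζ - 1) < δ →
    c * norm (ζ - 1) ^ (-(α / 2)) ≤ norm (Gfun α ζ) ∧
    norm (Gfun α ζ) ≤ C * norm (ζ - 1) ^ (-(α / 2)) := by
  set K : ℝ := |α| * Real.log (5/2) with hK
  refine ⟨Real.exp (-K), Real.exp K, 1/2, Real.exp_pos _, by norm_num, fun ζ hζ hlt => ?_⟩
  set w : ℂ := ζ ^ ((1:ℂ)/2) with hwdef
  have h0 : ζ ≠ 0 := SP1_ne_zero hζ
  have hζ1 : ζ ≠ 1 := by
    intro h'; exact hζ (by rw [h']; constructor <;> simp)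
  have hr0 : 0 < norm (ζ - 1) := by
    rw [norm_pos_iff]
    exact sub_ne_zero.mpr hζ1
  have hfac : ζ - 1 = (w - 1) * (w + 1) := by
    have := sqrt_mul_self h0
    rw [hwdef]; linear_combination -this
  have hrw : norm (ζ - 1) = norm (w - 1) * norm (w + 1) := by
    rw [hfac, norm_mul]
  have hv1 : 1 ≤ norm (w + 1) := by
    have h1 : (w + 1).re ≤ norm (w + 1) := Complex.re_le_norm _
    have h2 : 0 < w.re := sqrt_SP1_re_pos hζ
    simp only [Complex.add_re, Complex.one_re] at h1
    linarith
  have hv0 : 0 < norm (w + 1) := by linarith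
  have hu0 : 0 < norm (w - 1) := by
    by_contra hc
    push_neg at hc
    have : norm (w - 1) = 0 := le_antisymm hc (by positivity)
    rw [this, zero_mul] at hrw
    exact hr0.ne' hrw
  have hu_lt : norm (w - 1) < 1/2 := by
    calc norm (w - 1) = norm (w - 1) * 1 := (mul_one _).symm
    _ ≤ norm (w - 1) * norm (w + 1) :=
        mul_le_mul_of_nonneg_left hv1 hu0.le
    _ = norm (ζ - 1) := hrw.symm
    _ < 1/2 := hlt
  have hv_up : norm (w + 1) ≤ 5/2 := by
    have : ‖w + 1‖ = ‖(w - 1) + 2‖ := by ring_nf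
    have h2 : ‖(w - 1) + (2:ℂ)‖ ≤ ‖w - 1‖ + ‖(2:ℂ)‖ := norm_add_le _ _
    rw [this]
    have : norm (2:ℂ) = 2 := by norm_num
    rw [this] at h2
    linarith
  have hlogv : |Real.log (norm (w + 1))| ≤ Real.log (5/2) :=
    abs_log_interval (by norm_num) (by rw [show ((5:ℝ)/2)⁻¹ = 2/5 by norm_num]; linarith) hv_up
  have hlogu : Real.log (norm (w - 1)) =
      Real.log (norm (ζ - 1)) - Real.log (norm (w + 1)) := by
    rw [hrw, Real.log_mul hu0.ne' hv0.ne']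
    ring
  have hre : (gfun α ζ).re = -(α/2) * Real.log (norm (ζ - 1))
      + α * Real.log (norm (w + 1)) := by
    rw [gfun_re, ← hwdef, hlogu]
    ring
  have hsplit : norm (Gfun α ζ) =
      norm (ζ - 1) ^ (-(α/2)) * Real.exp (α * Real.log (norm (w + 1))) := by
    rw [abs_gfun_exp hζ, hre, Real.exp_add, Real.rpow_def_of_pos hr0]
    ring_nf
  have hElow : Real.exp (-K) ≤ Real.exp (α * Real.log (norm (w + 1))) := by
    apply Real.exp_le_exp.mpr
    have : |α * Real.log (norm (w + 1))| ≤ K := by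
      rw [hK, abs_mul]
      exact mul_le_mul_of_nonneg_left hlogv (abs_nonneg α)
    linarith [neg_abs_le (α * Real.log (norm (w + 1)))]
  have hEup : Real.exp (α * Real.log (norm (w + 1))) ≤ Real.exp K := by
    apply Real.exp_le_exp.mpr
    have : |α * Real.log (norm (w + 1))| ≤ K := by
      rw [hK, abs_mul]
      exact mul_le_mul_of_nonneg_left hlogv (abs_nonneg α)
    linarith [le_abs_self (α * Real.log (norm (w + 1)))]
  have hrpow_pos : 0 < norm (ζ - 1) ^ (-(α/2)) := Real.rpow_pos_of_pos hr0 _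
  constructor
  · rw [hsplit]
    calc Real.exp (-K) * norm (ζ - 1) ^ (-(α/2))
        = norm (ζ - 1) ^ (-(α/2)) * Real.exp (-K) := by ring
    _ ≤ norm (ζ - 1) ^ (-(α/2)) * Real.exp (α * Real.log (norm (w + 1))) :=
        mul_le_mul_of_nonneg_left hElow hrpow_pos.le
  · rw [hsplit]
    calc norm (ζ - 1) ^ (-(α/2)) * Real.exp (α * Real.log (norm (w + 1)))
        ≤ norm (ζ - 1) ^ (-(α/2)) * Real.exp K :=
        mul_le_mul_of_nonneg_left hEup hrpow_pos.le
    _ = Real.exp K * norm (ζ - 1) ^ (-(α/2)) := by ring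

lemma abs_log_le_two {r : ℝ} (h : 1/2 ≤ r) : |Real.log r| ≤ 2 * |r - 1| := by
  have hr0 : 0 < r := by linarith
  rcases le_or_gt 1 r with h1 | h1
  · rw [_root_.abs_of_nonneg (Real.log_nonneg h1),
      _root_.abs_of_nonneg (by linarith : (0:ℝ) ≤ r - 1)]
    have := Real.log_le_sub_one_of_pos hr0
    linarith
  · rw [_root_.abs_of_nonpos (Real.log_nonpos hr0.le h1.le),
      _root_.abs_of_neg (by linarith : r - 1 < 0)]
    have h2 : Real.log r⁻¹ ≤ r⁻¹ - 1 := Real.log_le_sub_one_of_pos (by positivity)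
    rw [Real.log_inv] at h2
    have h3 : r⁻¹ - 1 = (1 - r)/r := by field_simp
    rw [h3] at h2
    have h4 : (1 - r)/r ≤ 2*(1 - r) := by
      rw [div_le_iff₀ hr0]
      nlinarith
    linarith

lemma abs_sin_arg_abs {θ : ℝ} (h : |θ| ≤ Real.pi/2) : Real.sin |θ| = |Real.sin θ| := by
  rcases le_or_gt 0 θ with h1 | h1
  · have h' : θ ≤ Real.pi := by
      rw [_root_.abs_of_nonneg h1] at h; linarith [Real.pi_pos]
    rw [_root_.abs_of_nonneg h1,
      _root_.abs_of_nonneg (Real.sin_nonneg_of_nonneg_of_le_pi h1 h')]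
  · have hθ : -θ ≤ Real.pi/2 := by rw [abs_of_neg h1] at h; exact h
    have hs : Real.sin θ < 0 :=
      Real.sin_neg_of_neg_of_neg_pi_lt h1 (by linarith [Real.pi_pos])
    rw [_root_.abs_of_neg h1, Real.sin_neg, _root_.abs_of_neg hs]

lemma abs_log_le_six {b : ℂ} (h : norm (b - 1) ≤ 1/2) :
    norm (Complex.log b) ≤ 6 * norm (b - 1) := by
  have hre : 1/2 ≤ b.re := by
    have h1 : |(b - 1).re| ≤ norm (b - 1) := Complex.abs_re_le_norm _
    have h2 : (b - 1).re = b.re - 1 := by simp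
    rw [h2] at h1
    have := neg_abs_le (b.re - 1)
    linarith
  have hb0 : b ≠ 0 := by
    intro h'; rw [h'] at hre; simp at hre; linarith
  have habsb : 1/2 ≤ norm b := le_trans hre (Complex.re_le_norm b)
  have habsb0 : 0 < norm b := by linarith
  have hlogr : |Real.log (norm b)| ≤ 2 * norm (b - 1) := by
    have h1 := abs_log_le_two habsb
    have h2 : |norm b - 1| ≤ norm (b - 1) := by
      have := abs_norm_sub_norm_le b (1:ℂ)
      simpa using this
    linarith
  have hargpi2 : |b.arg| < Real.pi/2 :=
    Complex.abs_arg_lt_pi_div_two_iff.mpr (Or.inl (by linarith))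
  have hsin : |Real.sin b.arg| ≤ 2 * norm (b - 1) := by
    rw [Complex.sin_arg, abs_div, _root_.abs_of_pos habsb0]
    have him : |b.im| ≤ norm (b - 1) := by
      have h1 : |(b - 1).im| ≤ norm (b - 1) := Complex.abs_im_le_norm _
      simpa using h1
    calc |b.im| / norm b ≤ |b.im| / (1/2) :=
          div_le_div_of_nonneg_left (abs_nonneg _) (by norm_num) habsb
    _ = 2 * |b.im| := by ring
    _ ≤ 2 * norm (b - 1) := by linarith
  have harg : |b.arg| ≤ 4 * norm (b - 1) := by
    have hj := Real.mul_le_sin (abs_nonneg b.arg) hargpi2.le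
    rw [abs_sin_arg_abs hargpi2.le] at hj
    have hπ := Real.pi_le_four
    have hπ0 := Real.pi_pos
    have : |b.arg| ≤ Real.pi/2 * |Real.sin b.arg| := by
      have h5 : 2 * |b.arg| ≤ |Real.sin b.arg| * Real.pi := by
        rw [div_mul_eq_mul_div, div_le_iff₀ hπ0] at hj
        linarith
      nlinarith
    calc |b.arg| ≤ Real.pi/2 * |Real.sin b.arg| := this
    _ ≤ Real.pi/2 * (2 * norm (b - 1)) := by
        apply mul_le_mul_of_nonneg_left hsin (by positivity)
    _ = Real.pi * norm (b - 1) := by ring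
    _ ≤ 4 * norm (b - 1) := by
        apply mul_le_mul_of_nonneg_right hπ (by positivity)
  calc norm (Complex.log b) ≤ |(Complex.log b).re| + |(Complex.log b).im| :=
        Complex.norm_le_abs_re_add_abs_im _
  _ = |Real.log (norm b)| + |b.arg| := by rw [Complex.log_re, Complex.log_im]
  _ ≤ 2 * norm (b - 1) + 4 * norm (b - 1) := add_le_add hlogr harg
  _ = 6 * norm (b - 1) := by ring

lemma part7 (α : ℝ) : ∃ C R : ℝ, ∀ ζ ∈ SlitPlane1, R ≤ norm ζ →
    norm (Gfun α ζ - 1) ≤ C / Real.sqrt (norm ζ) := by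
  refine ⟨16 * |α|, (5 + 8*|α|)^2, fun ζ hζ hR => ?_⟩
  set w : ℂ := ζ ^ ((1:ℂ)/2) with hwdef
  have h0 : ζ ≠ 0 := SP1_ne_zero hζ
  have habs_w : norm w = Real.sqrt (norm ζ) := abs_sqrt h0
  have hα0 : (0:ℝ) ≤ |α| := abs_nonneg α
  have hw5 : 5 + 8*|α| ≤ norm w := by
    rw [habs_w, show (5 + 8*|α|) = Real.sqrt ((5 + 8*|α|)^2) by
      rw [Real.sqrt_sq (by positivity)]]
    exact Real.sqrt_le_sqrt hR
  have hw5' : 5 ≤ norm w := by linarith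
  have hwp1 : 4 ≤ norm (w + 1) := by
    have h1 : ‖w‖ - ‖(-1 : ℂ)‖ ≤ ‖w - (-1)‖ := norm_sub_norm_le _ _
    simp only [norm_neg, norm_one, sub_neg_eq_add] at h1
    linarith
  have hw1low : norm w - 1 ≤ norm (w + 1) := by
    have h1 : ‖w‖ - ‖(-1 : ℂ)‖ ≤ ‖w - (-1)‖ := norm_sub_norm_le _ _
    simp only [norm_neg, norm_one, sub_neg_eq_add] at h1
    linarith
  have hwp0 : w + 1 ≠ 0 := by
    intro h'
    rw [h'] at hwp1; simp at hwp1; linarith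
  have hw_re : 0 < w.re := sqrt_SP1_re_pos hζ
  set b : ℂ := (w - 1)/(w + 1) with hbdef
  have hb1 : b - 1 = -2/(w + 1) := by
    rw [hbdef]; field_simp; ring
  have habsb1 : norm (b - 1) = 2 / norm (w + 1) := by
    rw [hb1, norm_div]
    norm_num
  have hble : norm (b - 1) ≤ 1/2 := by
    rw [habsb1]
    rw [div_le_iff₀ (by linarith : (0:ℝ) < norm (w + 1))]
    linarith
  have hbre : 1/2 ≤ b.re := by
    have h1 : |(b - 1).re| ≤ norm (b - 1) := Complex.abs_re_le_norm _
    have h2 : (b - 1).re = b.re - 1 := by simp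
    rw [h2] at h1
    have := neg_abs_le (b.re - 1)
    linarith
  have hb0 : b ≠ 0 := by
    intro h'; rw [h'] at hbre; simp at hbre; linarith
  have hmul : (w + 1) * b = w - 1 := by
    rw [hbdef]; field_simp
  have hargs : (w + 1).arg + b.arg ∈ Set.Ioc (-Real.pi) Real.pi := by
    have h1 : |(w + 1).arg| < Real.pi/2 := Complex.abs_arg_lt_pi_div_two_iff.mpr
      (Or.inl (by simp only [Complex.add_re, Complex.one_re]; linarith))
    have h2 : |b.arg| < Real.pi/2 := Complex.abs_arg_lt_pi_div_two_iff.mpr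
      (Or.inl (by linarith))
    rw [abs_lt] at h1 h2
    constructor <;> [linarith; linarith]
  have hlogb : Complex.log (w - 1) = Complex.log (w + 1) + Complex.log b := by
    rw [← hmul]
    exact Complex.log_mul hwp0 hb0 hargs
  have hgeq : gfun α ζ = ((-(α/2) : ℝ) : ℂ) * Complex.log b := by
    rw [gfun, ← hwdef, hlogb]
    ring
  have hgabs : norm (gfun α ζ) ≤ 8 * |α| / norm w := by
    rw [hgeq, norm_mul, Complex.norm_real, Real.norm_eq_abs]
    rw [show |(-(α/2))| = |α|/2 by rw [abs_neg, abs_div]; norm_num]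
    calc |α|/2 * norm (Complex.log b) ≤ |α|/2 * (6 * norm (b - 1)) :=
          mul_le_mul_of_nonneg_left (abs_log_le_six hble) (by positivity)
    _ = 3 * |α| * norm (b - 1) := by ring
    _ = 3 * |α| * (2 / norm (w + 1)) := by rw [habsb1]
    _ = 6 * |α| / norm (w + 1) := by ring
    _ ≤ 8 * |α| / norm w := by
        rw [div_le_div_iff₀ (by linarith) (by linarith)]
        nlinarith [mul_le_mul_of_nonneg_left hw1low hα0, mul_le_mul_of_nonneg_left hw5' hα0]
  have hg1 : norm (gfun α ζ) ≤ 1 := by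
    calc norm (gfun α ζ) ≤ 8 * |α| / norm w := hgabs
    _ ≤ 8 * |α| / (5 + 8*|α|) := by
        apply div_le_div_of_nonneg_left (by positivity) (by positivity) hw5
    _ ≤ 1 := by
        rw [div_le_one (by positivity)]
        linarith
  calc norm (Gfun α ζ - 1)
      = norm (Complex.exp (gfun α ζ) - 1) := by rw [Gfun_eq hζ]
  _ ≤ 2 * norm (gfun α ζ) := Complex.norm_exp_sub_one_le hg1
  _ ≤ 2 * (8 * |α| / norm w) := by linarith
  _ = 16 * |α| / norm w := by ring
  _ = 16 * |α| / Real.sqrt (norm ζ) := by rw [habs_w]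


/-- Properties of the auxiliary Szegő-type function `G_α`. -/
theorem Gfun_properties (α : ℝ) :
    DifferentiableOn ℂ (Gfun α) SlitPlane1 ∧
    (∀ ζ ∈ SlitPlane1, Gfun α ζ ≠ 0) ∧
    (∀ x : ℝ, x < 0 → ∃ Gp Gm : ℂ,
      Tendsto (fun ε : ℝ => Gfun α ((x : ℂ) + ε * Complex.I))
        (nhdsWithin 0 (Set.Ioi 0)) (𝓝 Gp) ∧
      Tendsto (fun ε : ℝ => Gfun α ((x : ℂ) - ε * Complex.I))
        (nhdsWithin 0 (Set.Ioi 0)) (𝓝 Gm) ∧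
      Gp * Gm = 1) ∧
    (∀ x : ℝ, 0 < x → x < 1 → ∃ Gp Gm : ℂ,
      Tendsto (fun ε : ℝ => Gfun α ((x : ℂ) + ε * Complex.I))
        (nhdsWithin 0 (Set.Ioi 0)) (𝓝 Gp) ∧
      Tendsto (fun ε : ℝ => Gfun α ((x : ℂ) - ε * Complex.I))
        (nhdsWithin 0 (Set.Ioi 0)) (𝓝 Gm) ∧
      Gm = Gp * Complex.exp ((α : ℂ) * (Real.pi : ℂ) * Complex.I)) ∧
    (∃ δ C : ℝ, 0 < δ ∧ ∀ ζ ∈ SlitPlane1, ‖ζ‖ < δ →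
      ‖Gfun α ζ‖ ≤ C ∧ ‖(Gfun α ζ)⁻¹‖ ≤ C) ∧
    (∃ c C δ : ℝ, 0 < c ∧ 0 < δ ∧ ∀ ζ ∈ SlitPlane1, ‖ζ - 1‖ < δ →
      c * ‖ζ - 1‖ ^ (-(α / 2)) ≤ ‖Gfun α ζ‖ ∧
      ‖Gfun α ζ‖ ≤ C * ‖ζ - 1‖ ^ (-(α / 2))) ∧
    (∃ C R : ℝ, ∀ ζ ∈ SlitPlane1, R ≤ ‖ζ‖ →
      ‖Gfun α ζ - 1‖ ≤ C / Real.sqrt (‖ζ‖)) := by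
  refine ⟨Gfun_differentiableOn α, Gfun_ne_zero α,
    fun x hx => part3 α x hx, fun x hx0 hx1 => part4 α x hx0 hx1, ?_, part6 α, part7 α⟩
  obtain ⟨δ, C, hδ, hC⟩ := part5 α
  refine ⟨δ, C, hδ, fun ζ hζ hlt => ⟨(hC ζ hζ hlt).1, ?_⟩⟩
  rw [norm_inv]
  exact (hC ζ hζ hlt).2

end
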